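/- Let R be a commutative ring with total quotient ring T(R), and let * be an operation E ↦ E^* on the set of R-submodules of T(R) satisfying, for all R-submodules E, F of T(R) and all x ∈ T(R): xE^* ⊆ (xE)^*, with equality xE^* = (xE)^* when x is a regular element; E ⊆ F implies E^* ⊆ F^*; E ⊆ E^* and (E^*)^* = E^*. Assume * is of finite type (for every R-submodule E of T(R), E^* is the union of F^* over all finitely generated R-submodules F ⊆ E). Let I be an ideal of R with I^* ∩ R = I. If every minimal prime ideal of I is the radical of an ideal L with L^* = F^* for some finitely generated ideal F of R, then I has only finitely many minimal prime ideals. -/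

import Mathlib

open Pointwise nonZeroDivisors

/-- A "semistar-like" operation `*` on the `R`-submodules of the total quotient ring
`T` of a commutative ring `R`: for all submodules `E, F` and all `x ∈ T`,
`xE^* ⊆ (xE)^*` (with equality when `x` is regular), `E ⊆ F → E^* ⊆ F^*`,
`E ⊆ E^*`, and `(E^*)^* = E^*`. -/
structure StarOperation (R T : Type*) [CommRing R] [CommRing T] [Algebra R T] where
  star : Submodule R T → Submodule R T
  smul_star_le : ∀ (x : T) (E : Submodule R T), x • star E ≤ star (x • E)
  smul_star_of_regular : ∀ x ∈ nonZeroDivisors T, ∀ E : Submodule R T,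
    x • star E = star (x • E)
  mono : ∀ E F : Submodule R T, E ≤ F → star E ≤ star F
  le_star : ∀ E : Submodule R T, E ≤ star E
  star_star : ∀ E : Submodule R T, star (star E) = star E

namespace StarOperation

variable {R T : Type*} [CommRing R] [CommRing T] [Algebra R T]
variable (s : StarOperation R T)

/-- `*` is of finite type: `E^*` is the union of the `F^*` over the finitely
generated submodules `F ⊆ E`. -/
def FiniteType : Prop :=
  ∀ (E : Submodule R T) (x : T),
    x ∈ s.star E ↔ ∃ F : Submodule R T, F.FG ∧ F ≤ E ∧ x ∈ s.star F

/-- `I^*` for an ideal `I` of `R`. -/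
def idealStar (I : Ideal R) : Submodule R T :=
  s.star (Submodule.map (Algebra.linearMap R T) I)

end StarOperation

/-! ### Auxiliary lemmas about minimal primes -/

section MinimalPrimeAux

variable {R : Type*} [CommRing R]

lemma exists_mul_pow_mem_of_mem_minimalPrimes' {I P : Ideal R} (hP : P ∈ I.minimalPrimes)
    {x : R} (hx : x ∈ P) : ∃ (n : ℕ) (t : R), t ∉ P ∧ t * x ^ (n + 1) ∈ I := by
  have hPp : P.IsPrime := hP.1.1
  have hIP : I ≤ P := hP.1.2
  by_contra hcon
  push_neg at hcon
  set S : Submonoid R :=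
    { carrier := {y | ∃ t ∉ P, ∃ n : ℕ, y = t * x ^ n}
      one_mem' := ⟨1, hPp.ne_top ∘ (Ideal.eq_top_of_isUnit_mem P · isUnit_one), 0, by ring⟩
      mul_mem' := by
        rintro a b ⟨t, ht, n, rfl⟩ ⟨u, hu, m, rfl⟩
        exact ⟨t * u, fun hm => ((hPp.mem_or_mem hm).elim ht hu), n + m, by ring⟩ } with hS
  have hdisj : Disjoint (I : Set R) (S : Set R) := by
    rw [Set.disjoint_left]
    rintro y hyI ⟨t, ht, n, rfl⟩
    cases n with
    | zero => exact ht (hIP (by simpa using hyI))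
    | succ n => exact hcon n t ht hyI
  obtain ⟨Q, hQp, hIQ, hQS⟩ := Ideal.exists_le_prime_disjoint I S hdisj
  have hQP : Q ≤ P := by
    intro y hy
    by_contra hyP
    exact Set.disjoint_left.mp hQS hy ⟨y, hyP, 0, by ring⟩
  have hPQ : P ≤ Q := hP.2 ⟨hQp, hIQ⟩ hQP
  exact Set.disjoint_left.mp hQS (hPQ hx) ⟨1,
    hPp.ne_top ∘ (Ideal.eq_top_of_isUnit_mem P · isUnit_one), 1, by ring⟩

lemma exists_mul_pow_span_le_of_mem_minimalPrimes {I P : Ideal R} (hP : P ∈ I.minimalPrimes)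
    (S : Finset R) (hS : (S : Set R) ⊆ (P : Set R)) :
    ∃ (N : ℕ) (t : R), t ∉ P ∧ ∀ y ∈ (Ideal.span (S : Set R)) ^ (N + 1), t * y ∈ I := by
  classical
  have hPp : P.IsPrime := hP.1.1
  induction S using Finset.induction_on with
  | empty =>
    refine ⟨0, 1, hPp.ne_top ∘ (Ideal.eq_top_of_isUnit_mem P · isUnit_one), ?_⟩
    intro y hy
    rw [Finset.coe_empty, Ideal.span_empty, pow_one, Ideal.mem_bot] at hy
    simp [hy]
  | @insert a S' ha ih =>
    have haP : a ∈ P := hS (by simp)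
    obtain ⟨N', t', ht', hIH⟩ := ih (fun z hz => hS (by simp [hz]))
    obtain ⟨n, t, ht, htn⟩ := exists_mul_pow_mem_of_mem_minimalPrimes' hP haP
    refine ⟨n + N' + 1, t * t', fun hm => ((hPp.mem_or_mem hm).elim ht ht'), ?_⟩
    intro y hy
    have hsplit : (Ideal.span (insert a (S' : Set R))) ^ (n + N' + 1 + 1) ≤
        Ideal.span {a} ^ (n + 1) ⊔ Ideal.span (S' : Set R) ^ (N' + 1) := by
      rw [Ideal.span_insert]
      have heq : n + N' + 1 + 1 = (n + 1) + (N' + 1) := by ring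
      rw [heq]
      exact Ideal.sup_pow_add_le_pow_sup_pow
    rw [Finset.coe_insert] at hy
    obtain ⟨u, hu, v, hv, rfl⟩ := Submodule.mem_sup.mp (hsplit hy)
    have hu' : t * u ∈ I := by
      rw [Ideal.span_singleton_pow] at hu
      obtain ⟨r, hr⟩ := Ideal.mem_span_singleton'.mp hu
      have heq : t * u = r * (t * a ^ (n + 1)) := by rw [← hr]; ring
      rw [heq]
      exact I.mul_mem_left r htn
    have hv' : t' * v ∈ I := hIH v hv
    have heq : t * t' * (u + v) = t' * (t * u) + t * (t' * v) := by ring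
    rw [heq]
    exact I.add_mem (I.mul_mem_left t' hu') (I.mul_mem_left t hv')

end MinimalPrimeAux

/-! ### Auxiliary lemmas about star operations -/

namespace StarOperation

variable {R T : Type*} [CommRing R] [CommRing T] [Algebra R T]
variable (s : StarOperation R T)

lemma smul_le_of_forall (a : T) (S U : Submodule R T) (h : ∀ m ∈ S, a * m ∈ U) :
    a • S ≤ U := by
  intro x hx
  rw [← SetLike.mem_coe, Submodule.coe_pointwise_smul] at hx
  obtain ⟨m, hm, rfl⟩ := hx
  simpa [smul_eq_mul] using h m hm

lemma mul_star_le (E F : Submodule R T) : E * s.star F ≤ s.star (E * F) := by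
  rw [Submodule.mul_le]
  intro a ha b hb
  have h1 : a • b ∈ s.star (a • F) :=
    s.smul_star_le a F (Submodule.smul_mem_pointwise_smul b a _ hb)
  have h2 : a • F ≤ E * F := smul_le_of_forall a F _ fun m hm => Submodule.mul_mem_mul ha hm
  have h3 := s.mono _ _ h2 h1
  rwa [smul_eq_mul] at h3

lemma star_mul_star_le (E F : Submodule R T) : s.star E * s.star F ≤ s.star (E * F) := by
  rw [Submodule.mul_le]
  intro a ha b hb
  have h1 : a • b ∈ s.star (a • F) :=
    s.smul_star_le a F (Submodule.smul_mem_pointwise_smul b a _ hb)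
  have h2 : a • F ≤ s.star E * F := smul_le_of_forall a F _ fun m hm => Submodule.mul_mem_mul ha hm
  have h3 : s.star E * F ≤ s.star (E * F) := by
    rw [mul_comm]
    exact (s.mul_star_le F E).trans (le_of_eq (by rw [mul_comm]))
  have h4 := s.mono _ _ (h2.trans h3) h1
  rw [s.star_star] at h4
  rwa [smul_eq_mul] at h4

lemma pow_mem_star_pow {E : Submodule R T} {a : T} (ha : a ∈ s.star E) :
    ∀ n : ℕ, a ^ (n + 1) ∈ s.star (E ^ (n + 1))
  | 0 => by simpa using ha
  | n + 1 => by
    have h1 := pow_mem_star_pow ha n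
    have h2 : a ^ (n + 1) * a ∈ s.star (E ^ (n + 1)) * s.star E := Submodule.mul_mem_mul h1 ha
    have h3 := s.star_mul_star_le _ _ h2
    rwa [← pow_succ, ← pow_succ] at h3

/-- The closure operation on ideals of `R` induced by the star operation:
`J ↦ J^* ∩ R`. -/
def starCl (J : Ideal R) : Ideal R :=
  Submodule.comap (Algebra.linearMap R T) (s.idealStar J)

lemma mem_starCl {J : Ideal R} {x : R} :
    x ∈ s.starCl J ↔
      algebraMap R T x ∈ s.star (Submodule.map (Algebra.linearMap R T) J) := Iff.rfl

lemma le_starCl (J : Ideal R) : J ≤ s.starCl J := by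
  intro x hx
  exact s.le_star _ ⟨x, hx, rfl⟩

lemma starCl_mono {J K : Ideal R} (h : J ≤ K) : s.starCl J ≤ s.starCl K :=
  Submodule.comap_mono (s.mono _ _ (Submodule.map_mono h))

lemma map_linearMap_pow (J : Ideal R) (n : ℕ) :
    Submodule.map (Algebra.linearMap R T) (J ^ n) =
      Submodule.map (Algebra.linearMap R T) J ^ n := by
  have h : Algebra.linearMap R T = (Algebra.ofId R T).toLinearMap := rfl
  rw [h, Submodule.map_pow]

lemma pow_mem_starCl_pow {J : Ideal R} {x : R} (hx : x ∈ s.starCl J) (n : ℕ) :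
    x ^ (n + 1) ∈ s.starCl (J ^ (n + 1)) := by
  rw [mem_starCl] at hx ⊢
  rw [map_linearMap_pow, map_pow]
  exact s.pow_mem_star_pow hx n

lemma mul_mem_starCl_of_forall {J K : Ideal R} {x t : R} (hx : x ∈ s.starCl J)
    (h : ∀ y ∈ J, t * y ∈ K) : t * x ∈ s.starCl K := by
  rw [mem_starCl] at hx ⊢
  have h1 : algebraMap R T t • s.star (Submodule.map (Algebra.linearMap R T) J) ≤
      s.star (algebraMap R T t • Submodule.map (Algebra.linearMap R T) J) :=
    s.smul_star_le _ _
  have h2 : algebraMap R T t • Submodule.map (Algebra.linearMap R T) J ≤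
      Submodule.map (Algebra.linearMap R T) K := by
    refine smul_le_of_forall _ _ _ ?_
    rintro m ⟨y, hy, rfl⟩
    exact ⟨t * y, h y hy, by simp⟩
  have h3 := s.mono _ _ h2 (h1 (Submodule.smul_mem_pointwise_smul _ _ _ hx))
  rw [smul_eq_mul] at h3
  rwa [map_mul]

lemma starCl_eq_self_of_minimalPrime (hs : s.FiniteType) {I P : Ideal R}
    (hI : s.starCl I = I) (hP : P ∈ I.minimalPrimes) : s.starCl P = P := by
  classical
  refine le_antisymm ?_ (s.le_starCl P)
  intro x hx
  rw [mem_starCl] at hx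
  obtain ⟨F', hFG, hFle, hxF'⟩ := (hs _ _).mp hx
  obtain ⟨Sf, hspan⟩ := hFG
  have hmem : ∀ u ∈ Sf, ∃ a, a ∈ P ∧ Algebra.linearMap R T a = u := by
    intro u hu
    have hu' : (u : T) ∈ Submodule.map (Algebra.linearMap R T) P :=
      hFle (hspan ▸ Submodule.subset_span hu)
    obtain ⟨a, ha, rfl⟩ := hu'
    exact ⟨a, ha, rfl⟩
  choose g hg1 hg2 using hmem
  set A : Finset R := Sf.attach.image (fun u => g u.1 u.2) with hA
  have hAP : (A : Set R) ⊆ (P : Set R) := by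
    intro z hz
    rw [Finset.mem_coe, hA, Finset.mem_image] at hz
    obtain ⟨u, _, rfl⟩ := hz
    simpa using hg1 u.1 u.2
  have hF'le : F' ≤ Submodule.map (Algebra.linearMap R T) (Ideal.span (A : Set R)) := by
    rw [← hspan, Submodule.span_le]
    intro u hu
    rw [Finset.mem_coe] at hu
    refine ⟨g u hu, Ideal.subset_span ?_, hg2 u hu⟩
    rw [Finset.mem_coe, hA, Finset.mem_image]
    exact ⟨⟨u, hu⟩, Finset.mem_attach _ _, rfl⟩
  have hxA : x ∈ s.starCl (Ideal.span (A : Set R)) := s.mono _ _ hF'le hxF'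
  obtain ⟨N, t, htP, ht⟩ := exists_mul_pow_span_le_of_mem_minimalPrimes hP A hAP
  have h1 : x ^ (N + 1) ∈ s.starCl ((Ideal.span (A : Set R)) ^ (N + 1)) :=
    s.pow_mem_starCl_pow hxA N
  have h2 : t * x ^ (N + 1) ∈ s.starCl I := s.mul_mem_starCl_of_forall h1 ht
  rw [hI] at h2
  have h3 : t * x ^ (N + 1) ∈ P := hP.1.2 h2
  have h4 := (hP.1.1.mem_or_mem h3).resolve_left htP
  exact hP.1.1.mem_of_pow_mem _ h4

end StarOperation

/-- Let `R` be a commutative ring with total quotient ring `T`, and let `*` be a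
finite type star-like operation on the `R`-submodules of `T`.  Let `I` be an ideal
of `R` with `I^* ∩ R = I`.  If every minimal prime of `I` is the radical of an ideal
`L` with `L^* = F^*` for some finitely generated ideal `F` of `R`, then `I` has only
finitely many minimal primes. -/
theorem minimalPrimes_finite_of_quasiStarIdeal_ring {R T : Type*} [CommRing R]
    [CommRing T] [Algebra R T] [IsLocalization R⁰ T] (s : StarOperation R T)
    (hs : s.FiniteType) (I : Ideal R)
    (hI : Submodule.comap (Algebra.linearMap R T) (s.idealStar I) = I)
    (h : ∀ P ∈ I.minimalPrimes, ∃ L : Ideal R,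
      (∃ F : Ideal R, F.FG ∧ s.idealStar L = s.idealStar F) ∧ P = L.radical) :
    I.minimalPrimes.Finite := by
  classical
  rw [← Set.not_infinite]
  intro hinf
  haveI := hinf.to_subtype
  have hc : s.starCl I = I := hI
  have hd : ∀ p : ↥I.minimalPrimes, ∃ FS : Finset R,
      Ideal.span (FS : Set R) ≤ (p : Ideal R) ∧
      ∀ Q ∈ I.minimalPrimes, Ideal.span (FS : Set R) ≤ Q → Q = (p : Ideal R) := by
    rintro ⟨P, hP⟩
    obtain ⟨L, ⟨F, hFfg, hstar⟩, hrad⟩ := h P hP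
    obtain ⟨FS, hFS⟩ := hFfg
    have hclF : s.starCl F = s.starCl L := by
      unfold StarOperation.starCl
      rw [← hstar]
    have hLP : L ≤ P := hrad ▸ Ideal.le_radical
    have hPc : s.starCl P = P := s.starCl_eq_self_of_minimalPrime hs hc hP
    refine ⟨FS, ?_, ?_⟩
    · calc Ideal.span (FS : Set R) = F := hFS
        _ ≤ s.starCl F := s.le_starCl F
        _ = s.starCl L := hclF
        _ ≤ s.starCl P := s.starCl_mono hLP
        _ = P := hPc
    · intro Q hQ hle
      have hQc : s.starCl Q = Q := s.starCl_eq_self_of_minimalPrime hs hc hQ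
      have hLQ : L ≤ Q := by
        calc L ≤ s.starCl L := s.le_starCl L
          _ = s.starCl F := hclF.symm
          _ ≤ s.starCl Q := s.starCl_mono (by rw [← hFS]; exact hle)
          _ = Q := hQc
      have hPQ : P ≤ Q := by
        rw [hrad]
        calc L.radical ≤ Q.radical := Ideal.radical_mono hLQ
          _ = Q := hQ.1.1.radical
      exact le_antisymm (hQ.2 ⟨hP.1.1, hP.1.2⟩ hPQ) hPQ
  choose FS hle hsep using hd
  set 𝒰 : Ultrafilter ↥I.minimalPrimes := Filter.hyperfilter ↥I.minimalPrimes with h𝒰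
  let Q : Ideal R :=
    { carrier := {x | {p : ↥I.minimalPrimes | x ∈ (p : Ideal R)} ∈ 𝒰}
      add_mem' := fun {a b} ha hb =>
        Filter.mem_of_superset (Filter.inter_mem ha hb) fun p hp => Ideal.add_mem _ hp.1 hp.2
      zero_mem' := Filter.mem_of_superset Filter.univ_mem fun p _ => Ideal.zero_mem _
      smul_mem' := fun c x hx => Filter.mem_of_superset hx fun p hp => by
        simpa [smul_eq_mul] using Ideal.mul_mem_left _ c hp }
  have hQmem : ∀ x : R, x ∈ Q ↔ {p : ↥I.minimalPrimes | x ∈ (p : Ideal R)} ∈ 𝒰 :=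
    fun x => Iff.rfl
  have hQprime : Q.IsPrime := by
    constructor
    · intro htop
      have h1 : (1 : R) ∈ Q := htop ▸ Submodule.mem_top
      rw [hQmem] at h1
      have hempty : {p : ↥I.minimalPrimes | (1 : R) ∈ (p : Ideal R)} = ∅ := by
        ext p
        simp only [Set.mem_setOf_eq, Set.mem_empty_iff_false, iff_false]
        exact fun hmem => p.2.1.1.ne_top (Ideal.eq_top_of_isUnit_mem _ hmem isUnit_one)
      rw [hempty] at h1
      exact (Ultrafilter.neBot 𝒰).ne (Filter.empty_mem_iff_bot.mp h1)
    · intro x y hxy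
      rw [hQmem] at hxy
      have hunion : {p : ↥I.minimalPrimes | x * y ∈ (p : Ideal R)} ⊆
          {p : ↥I.minimalPrimes | x ∈ (p : Ideal R)} ∪
          {p : ↥I.minimalPrimes | y ∈ (p : Ideal R)} := by
        intro p hp
        exact p.2.1.1.mem_or_mem hp
      have := Filter.mem_of_superset hxy hunion
      rcases Ultrafilter.union_mem_iff.mp this with h' | h'
      · exact Or.inl ((hQmem x).mpr h')
      · exact Or.inr ((hQmem y).mpr h')
  have hIQ : I ≤ Q := fun x hx =>
    Filter.mem_of_superset Filter.univ_mem fun p _ => p.2.1.2 hx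
  haveI := hQprime
  obtain ⟨P₀, hP₀, hP₀Q⟩ := Ideal.exists_minimalPrimes_le hIQ
  set p₀ : ↥I.minimalPrimes := ⟨P₀, hP₀⟩ with hp₀
  have hmem𝒰 : (⋂ a ∈ FS p₀, {p : ↥I.minimalPrimes | a ∈ (p : Ideal R)}) ∈ 𝒰 := by
    refine (Filter.biInter_finset_mem _).mpr ?_
    intro a ha
    have haQ : a ∈ Q := hP₀Q (hle p₀ (Ideal.subset_span ha))
    exact (hQmem a).mp haQ
  have hsub : (⋂ a ∈ FS p₀, {p : ↥I.minimalPrimes | a ∈ (p : Ideal R)}) ⊆ {p₀} := by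
    intro p hp
    simp only [Set.mem_iInter, Set.mem_setOf_eq] at hp
    have hsp : Ideal.span ((FS p₀ : Finset R) : Set R) ≤ (p : Ideal R) := by
      rw [Ideal.span_le]
      intro z hz
      exact hp z hz
    have := hsep p₀ (p : Ideal R) p.2 hsp
    exact Set.mem_singleton_iff.mpr (Subtype.ext this)
  have hsingle : ({p₀} : Set ↥I.minimalPrimes) ∈ 𝒰 := Filter.mem_of_superset hmem𝒰 hsub
  rw [h𝒰] at hsingle
  exact Filter.notMem_hyperfilter_of_finite (Set.finite_singleton p₀) hsingle
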